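/- For every nonnegative integer i and every integer k ≥ 1, c(i,1,k) = (-1)^{i+1} · binom(k+i-1, i) · i! · (H_{k+i-1} - H_{k-1}), where H_n = Σ_{r=1}^{n} 1/r denotes the n-th harmonic number (H_0 = 0). -/

import Mathlib

open Finset

/-- Signed Stirling numbers of the first kind, defined as the coefficients of the
falling factorial polynomial `x*(x-1)*...*(x-i+1) = sum_{r=0}^{i} s(i,r)*x^r`. -/
noncomputable def s (i r : ℕ) : ℝ := (descPochhammer ℝ i).coeff r

/-- Moment generating Stirling numbers of the first kind (MSN1):
`c(i,j,k) = sum_{r=j}^{i} binom(r,j)*(-k)^(r-j)*s(i,r)` (and `0` if `j > i`). -/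
noncomputable def c (i j : ℕ) (k : ℝ) : ℝ :=
  ∑ r ∈ Finset.Icc j i, (r.choose j : ℝ) * (-k) ^ (r - j) * s i r

/-- Harmonic numbers `H_n = sum_{r=1}^{n} 1/r` (with `H_0 = 0`). -/
noncomputable def H (n : ℕ) : ℝ := ∑ r ∈ Finset.Icc 1 n, (1 : ℝ) / r

open Polynomial in
lemma s_succ (i q : ℕ) : s (i+1) (q+1) = s i q - (i:ℝ) * s i (q+1) := by
  unfold s
  rw [descPochhammer_succ_right, show ((i : ℝ[X])) = Polynomial.C (i:ℝ) by simp,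
    Polynomial.coeff_mul_X_sub_C]
  ring

lemma s_top (i : ℕ) : s i (i+1) = 0 :=
  Polynomial.coeff_eq_zero_of_natDegree_lt (by simp)

lemma eval_sum (i : ℕ) (x : ℝ) :
    (descPochhammer ℝ i).eval (-x) = ∑ q ∈ Finset.range (i+1), (-x)^q * s i q := by
  rw [Polynomial.eval_eq_sum_range, descPochhammer_natDegree]
  exact Finset.sum_congr rfl fun q _ => mul_comm _ _

lemma c_one (i : ℕ) (x : ℝ) :
    c i 1 x = ∑ q ∈ Finset.range i, ((q:ℝ)+1) * (-x)^q * s i (q+1) := by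
  rw [c, ← Finset.Ico_add_one_right_eq_Icc, Finset.sum_Ico_eq_sum_range]
  refine Finset.sum_congr rfl fun q _ => ?_
  rw [Nat.add_comm 1 q, Nat.choose_one_right, Nat.add_sub_cancel]
  push_cast
  ring

lemma c_rec (i : ℕ) (x : ℝ) :
    c (i+1) 1 x = (-x - i) * c i 1 x + (descPochhammer ℝ i).eval (-x) := by
  rw [c_one, c_one]
  have key : ∀ q ∈ Finset.range (i+1), ((q:ℝ)+1) * (-x)^q * s (i+1) (q+1)
      = (((q:ℝ) * (-x)^q * s i q + (-x)^q * s i q)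
        - (i:ℝ) * (((q:ℝ)+1) * (-x)^q * s i (q+1))) := by
    intro q _; rw [s_succ]; ring
  rw [Finset.sum_congr rfl key, Finset.sum_sub_distrib, Finset.sum_add_distrib, ← eval_sum]
  have A : ∑ q ∈ Finset.range (i+1), (q:ℝ) * (-x)^q * s i q
      = (-x) * ∑ q ∈ Finset.range i, ((q:ℝ)+1) * (-x)^q * s i (q+1) := by
    rw [Finset.sum_range_succ']
    simp only [Nat.cast_zero, zero_mul, pow_zero, add_zero]
    rw [Finset.mul_sum]
    refine Finset.sum_congr rfl fun q _ => ?_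
    push_cast
    ring
  have B : ∑ q ∈ Finset.range (i+1), (i:ℝ) * (((q:ℝ)+1) * (-x)^q * s i (q+1))
      = (i:ℝ) * ∑ q ∈ Finset.range i, ((q:ℝ)+1) * (-x)^q * s i (q+1) := by
    rw [← Finset.mul_sum, Finset.sum_range_succ, s_top, mul_zero, add_zero]
  rw [A, B]; ring

lemma nat_key (i k : ℕ) (hk : 1 ≤ k) :
    (Nat.factorial (i+1) : ℝ) * ((k+i).choose (i+1) : ℝ)
      = ((k:ℝ)+i) * ((Nat.factorial i : ℝ) * ((k+i-1).choose i : ℝ)) := by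
  have hkey : Nat.factorial (i+1) * ((k+i).choose (i+1))
      = (k+i) * (Nat.factorial i * ((k+i-1).choose i)) := by
    obtain ⟨m, rfl⟩ : ∃ m, k = m + 1 := ⟨k-1, by omega⟩
    have h1 : m + 1 + i - 1 = m + i := by omega
    have h2 : m + 1 + i = (m+i) + 1 := by omega
    rw [h1, h2, ← Nat.descFactorial_eq_factorial_mul_choose,
      ← Nat.descFactorial_eq_factorial_mul_choose, Nat.succ_descFactorial_succ]
  exact_mod_cast congrArg (Nat.cast : ℕ → ℝ) hkey

lemma eval_desc (i k : ℕ) (hk : 1 ≤ k) :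
    (descPochhammer ℝ i).eval (-(k:ℝ))
      = (-1)^i * ((k+i-1).choose i : ℝ) * (Nat.factorial i : ℝ) := by
  induction i with
  | zero => simp [descPochhammer]
  | succ i ih =>
    rw [descPochhammer_succ_right, Polynomial.eval_mul, Polynomial.eval_sub,
      Polynomial.eval_X, Polynomial.eval_natCast, ih]
    have h3 : k + (i+1) - 1 = k + i := by omega
    rw [h3]
    linear_combination (-1:ℝ)^i * nat_key i k hk

/-- For integer `k ≥ 1`,
`c(i,1,k) = (-1)^(i+1) * binom(k+i-1,i) * i! * (H_{k+i-1} - H_{k-1})`. -/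
theorem msn1_one_eq_harmonic (i k : ℕ) (hk : 1 ≤ k) :
    c i 1 (k : ℝ) =
      (-1 : ℝ) ^ (i + 1) * ((k + i - 1).choose i : ℝ) * (Nat.factorial i : ℝ) *
        (H (k + i - 1) - H (k - 1)) := by
  induction i with
  | zero => simp [c, H]
  | succ i ih =>
    rw [c_rec, ih, eval_desc i k hk]
    have h34 : k + (i+1) - 1 = k + i := by omega
    have h4 : k + i - 1 + 1 = k + i := by omega
    have hne : ((k:ℝ)+i) ≠ 0 := by positivity
    have hH : H (k + i) = H (k + i - 1) + 1/((k:ℝ)+i) := by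
      rw [H, H, ← Finset.Ico_add_one_right_eq_Icc, ← Finset.Ico_add_one_right_eq_Icc,
        ← h4, Finset.sum_Ico_succ_top (by omega : 1 ≤ k + i - 1 + 1)]
      push_cast [h4]
      ring
    rw [h34, hH]
    have key2 : ((-1:ℝ))^(i+1+1) * ((k+i).choose (i+1) : ℝ) * (Nat.factorial (i+1) : ℝ)
        = (-1)^i * (((k:ℝ)+i) * (((k+i-1).choose i : ℝ) * (Nat.factorial i : ℝ))) := by
      linear_combination (-1:ℝ)^i * nat_key i k hk
    rw [key2]
    linear_combination (-((-1:ℝ)^i) * (((k+i-1).choose i : ℝ) * (Nat.factorial i : ℝ)))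
      * mul_inv_cancel₀ hne
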